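/- For Z(t) = X(t)+iY(t) a point in the Siegel upper half space, v a nonzero vector in ℂⁿ, and γ a complex symmetric n×n matrix, one has F_{v*Zv}(v*γv) ≤ F_Z(γ), i.e., |v*γv|/(v*Yv) ≤ ‖Y^{-1/2} γ Y^{-1/2}‖, where Y = Im Z is positive definite. -/

import Mathlib

open Matrix

noncomputable section

/-- The standard symplectic form matrix over ℂ. -/
def J (n : ℕ) : Matrix (Fin n ⊕ Fin n) (Fin n ⊕ Fin n) ℂ :=
  Matrix.fromBlocks 0 1 (-1) 0

/-- The standard symplectic form matrix over ℝ. -/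
def JR (n : ℕ) : Matrix (Fin n ⊕ Fin n) (Fin n ⊕ Fin n) ℝ :=
  Matrix.fromBlocks 0 1 (-1) 0

/-- Membership in the Siegel upper half space: symmetric with positive definite
imaginary part. -/
def InSiegel {n : ℕ} (Z : Matrix (Fin n) (Fin n) ℂ) : Prop :=
  Zᵀ = Z ∧ (Z.map Complex.im).PosDef

/-- Membership in the lower Siegel space: symmetric with negative definite
imaginary part. -/
def InSiegelBar {n : ℕ} (Z : Matrix (Fin n) (Fin n) ℂ) : Prop :=
  Zᵀ = Z ∧ (-(Z.map Complex.im)).PosDef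

/-- The generalized linear fractional transformation Φ. -/
def Phi {n : ℕ} (A B C D Z : Matrix (Fin n) (Fin n) ℂ) : Matrix (Fin n) (Fin n) ℂ :=
  (A * Z + B) * (C * Z + D)⁻¹

/-- The ℓ²-operator norm of a complex matrix. -/
def opNorm {n : ℕ} (M : Matrix (Fin n) (Fin n) ℂ) : ℝ :=
  ‖Matrix.toEuclideanCLM (𝕜 := ℂ) (n := Fin n) M‖

section

open scoped ComplexOrder

/-- The positive semidefinite square root of a positive semidefinite matrix
(the definition Mathlib had in December 2024, since removed from Mathlib). -/
def Matrix.PosSemidef.sqrt {m : Type*} [Fintype m] [DecidableEq m] {𝕜 : Type*} [RCLike 𝕜]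
    {A : Matrix m m 𝕜} (hA : A.PosSemidef) : Matrix m m 𝕜 :=
  hA.1.eigenvectorUnitary.1 * diagonal ((↑) ∘ (√·) ∘ hA.1.eigenvalues) *
  (star hA.1.eigenvectorUnitary : Matrix m m 𝕜)

end

theorem psdSqrt_mul_self_real {m : Type*} [Fintype m] [DecidableEq m]
    {A : Matrix m m ℝ} (hA : A.PosSemidef) : hA.sqrt * hA.sqrt = A := by
  have hU := Unitary.coe_star_mul_self hA.1.eigenvectorUnitary
  unfold Matrix.PosSemidef.sqrt
  conv_rhs => rw [hA.1.spectral_theorem, Unitary.conjStarAlgAut_apply]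
  calc _ = (hA.1.eigenvectorUnitary : Matrix m m ℝ) *
        (diagonal (RCLike.ofReal ∘ (√·) ∘ hA.1.eigenvalues) *
          ((star hA.1.eigenvectorUnitary : Matrix m m ℝ) * (hA.1.eigenvectorUnitary : Matrix m m ℝ)) *
          diagonal (RCLike.ofReal ∘ (√·) ∘ hA.1.eigenvalues)) *
        (star hA.1.eigenvectorUnitary : Matrix m m ℝ) := by simp only [mul_assoc]
    _ = _ := by
      rw [hU, mul_one, diagonal_mul_diagonal]
      congr 3
      funext i
      simp [Real.mul_self_sqrt (hA.eigenvalues_nonneg i)]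

theorem psdSqrt_transpose_real {m : Type*} [Fintype m] [DecidableEq m]
    {A : Matrix m m ℝ} (hA : A.PosSemidef) : hA.sqrtᵀ = hA.sqrt := by
  rw [← conjTranspose_eq_transpose_of_trivial]
  unfold Matrix.PosSemidef.sqrt
  simp [conjTranspose_mul, mul_assoc, Matrix.star_eq_conjTranspose,
    conjTranspose_eq_transpose_of_trivial]

theorem stmt19 (n : ℕ) (Z γ : Matrix (Fin n) (Fin n) ℂ)
    (hZs : Zᵀ = Z) (hY : (Z.map Complex.im).PosDef) (hγ : γᵀ = γ)
    (v : Fin n → ℂ) (hv : v ≠ 0) :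
    ‖star v ⬝ᵥ γ.mulVec v‖ /
        (star v ⬝ᵥ ((Z.map Complex.im).map Complex.ofReal).mulVec v).re ≤
      opNorm ((hY.inv.posSemidef.sqrt.map Complex.ofReal) * γ *
        (hY.inv.posSemidef.sqrt.map Complex.ofReal)) := by
  set Y := Z.map Complex.im with hYdef
  set S := hY.inv.posSemidef.sqrt with hSdef
  have hSS : S * S = Y⁻¹ := psdSqrt_mul_self_real hY.inv.posSemidef
  set SC : Matrix (Fin n) (Fin n) ℂ := S.map Complex.ofReal with hSCdef
  set YC : Matrix (Fin n) (Fin n) ℂ := Y.map Complex.ofReal with hYCdef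
  -- complexified products
  have hmap : ∀ A B : Matrix (Fin n) (Fin n) ℝ,
      (A * B).map (Complex.ofReal : ℝ → ℂ) = A.map Complex.ofReal * B.map Complex.ofReal := by
    intro A B
    exact Matrix.map_mul (f := Complex.ofRealHom)
  -- det SC ≠ 0
  have hdetS : S.det ≠ 0 := by
    intro h
    have : (Y⁻¹).det = 0 := by rw [← hSS, det_mul, h, mul_zero]
    have := hY.inv.det_pos
    simp_all
  have hdetSC : SC.det ≠ 0 := by
    have h := RingHom.map_det (Complex.ofRealHom) S
    rw [RingHom.mapMatrix_apply, show (⇑Complex.ofRealHom : ℝ → ℂ) = Complex.ofReal from rfl] at h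
    rw [hSCdef, ← h]
    simpa using hdetS
  have hSCunit : IsUnit SC.det := isUnit_iff_ne_zero.mpr hdetSC
  -- SC * SC * YC = 1
  have hYinvY : Y⁻¹ * Y = 1 := nonsing_inv_mul Y (isUnit_iff_ne_zero.mpr (ne_of_gt hY.det_pos))
  have hSSY : SC * SC * YC = 1 := by
    rw [hSCdef, hYCdef, ← hmap, ← hmap, hSS, hYinvY]
    simp [Matrix.map_one]
  have hSCinv : SC * SC⁻¹ = 1 := mul_nonsing_inv SC hSCunit
  have hSCinv' : SC⁻¹ * SC = 1 := nonsing_inv_mul SC hSCunit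
  set w : Fin n → ℂ := SC⁻¹.mulVec v with hwdef
  have hvw : v = SC.mulVec w := by
    rw [hwdef, mulVec_mulVec, hSCinv, one_mulVec]
  have hw0 : w ≠ 0 := by
    intro h
    apply hv
    rw [hvw, h, mulVec_zero]
  -- SC Hermitian
  have hSh : Sᵀ = S := psdSqrt_transpose_real hY.inv.posSemidef
  have hSCh : SCᴴ = SC := by
    ext i j
    simp [hSCdef, conjTranspose_apply, ← congrFun (congrFun hSh j) i, transpose_apply]
  -- quadratic form for γ
  have hquadγ : star v ⬝ᵥ γ.mulVec v = star w ⬝ᵥ (SC * γ * SC).mulVec w := by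
    rw [hvw, star_mulVec, hSCh, ← mulVec_mulVec, dotProduct_mulVec, vecMul_vecMul,
      ← dotProduct_mulVec, mulVec_mulVec]
  -- quadratic form for Y
  have hSYS : SC * YC * SC = 1 := by
    have hYCeq : YC = SC⁻¹ * SC⁻¹ := by
      calc YC = (SC * SC)⁻¹ * (SC * SC) * YC := by
              rw [nonsing_inv_mul _ (isUnit_iff_ne_zero.mpr (by rw [det_mul]; exact mul_ne_zero hdetSC hdetSC)), one_mul]
        _ = (SC * SC)⁻¹ := by rw [mul_assoc, hSSY, mul_one]
        _ = SC⁻¹ * SC⁻¹ := by rw [Matrix.mul_inv_rev]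
    rw [hYCeq]
    simp only [← mul_assoc]
    rw [hSCinv, one_mul, hSCinv']
  have hquadY : star v ⬝ᵥ YC.mulVec v = star w ⬝ᵥ w := by
    rw [hvw, star_mulVec, hSCh, mulVec_mulVec, dotProduct_mulVec, vecMul_vecMul,
      ← mul_assoc, hSYS, vecMul_one]
  -- Euclidean space
  set we : EuclideanSpace ℂ (Fin n) := (WithLp.equiv 2 _).symm w with hwedef
  set M : Matrix (Fin n) (Fin n) ℂ := SC * γ * SC with hMdef
  have hinner : (inner ℂ we ((Matrix.toEuclideanCLM (𝕜 := ℂ)) M we) : ℂ) = star w ⬝ᵥ M.mulVec w := by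
    exact dotProduct_comm _ _
  have hnormw : (star w ⬝ᵥ w).re = ‖we‖ ^ 2 := by
    have : (inner ℂ we we : ℂ) = star w ⬝ᵥ w := dotProduct_comm _ _
    rw [← this, inner_self_eq_norm_sq_to_K]
    norm_cast
  have hbound : ‖star w ⬝ᵥ M.mulVec w‖ ≤ opNorm M * ‖we‖ ^ 2 := by
    rw [← hinner]
    calc ‖(inner ℂ we ((Matrix.toEuclideanCLM (𝕜 := ℂ)) M we) : ℂ)‖
        ≤ ‖we‖ * ‖(Matrix.toEuclideanCLM (𝕜 := ℂ)) M we‖ := norm_inner_le_norm _ _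
      _ ≤ ‖we‖ * (opNorm M * ‖we‖) := by
          apply mul_le_mul_of_nonneg_left (ContinuousLinearMap.le_opNorm _ _) (norm_nonneg _)
      _ = opNorm M * ‖we‖ ^ 2 := by ring
  have hwpos : (0:ℝ) < ‖we‖ ^ 2 := by
    apply pow_pos
    rw [norm_pos_iff]
    intro h
    apply hw0
    have := congrArg (WithLp.equiv 2 (Fin n → ℂ)) h
    simpa [hwedef] using this
  rw [hquadγ, hquadY, hnormw]
  rw [div_le_iff₀ hwpos]
  exact hbound
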